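/- arXiv:2308.11815 — 4 statements merged into one kernel-verified Lean document; each statement's English description precedes it below -/
import Mathlib

section
/- The group C_3 × C_3 is not fully realizable: there is no ring R of characteristic 2, generated by its units, such that R^× ≅ C_3 × C_3 and every group endomorphism of R^× is induced by a ring endomorphism of R, under the classification that such R must be isomorphic to F_4 × F_4 or F_2 × F_4 × F_4. Concretely: for R = F_4 × F_4 and for R = F_2 × F_4 × F_4, the map End_Ring(R) → End_Group(R^×) is not surjective. -/
theorem C3xC3_not_fully_realizable :
    (¬ Function.Surjective
      (fun f : (GaloisField 2 2 × GaloisField 2 2) →+*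
          (GaloisField 2 2 × GaloisField 2 2) =>
        (Units.map (f : (GaloisField 2 2 × GaloisField 2 2) →*
          (GaloisField 2 2 × GaloisField 2 2)) :
          (GaloisField 2 2 × GaloisField 2 2)ˣ →*
          (GaloisField 2 2 × GaloisField 2 2)ˣ))) ∧
    (¬ Function.Surjective
      (fun f : (ZMod 2 × GaloisField 2 2 × GaloisField 2 2) →+*
          (ZMod 2 × GaloisField 2 2 × GaloisField 2 2) =>
        (Units.map (f : (ZMod 2 × GaloisField 2 2 × GaloisField 2 2) →*
          (ZMod 2 × GaloisField 2 2 × GaloisField 2 2)) :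
          (ZMod 2 × GaloisField 2 2 × GaloisField 2 2)ˣ →*
          (ZMod 2 × GaloisField 2 2 × GaloisField 2 2)ˣ))) := by
  haveI : Fintype (GaloisField 2 2) := Fintype.ofFinite _
  have hcard : Fintype.card (GaloisField 2 2) = 4 := by
    rw [← Nat.card_eq_fintype_card]
    have := GaloisField.card 2 2 (by norm_num)
    simpa using this
  have h2 : (2 : GaloisField 2 2) = 0 := by
    exact_mod_cast CharP.cast_eq_zero (GaloisField 2 2) 2
  haveI : DecidableEq (GaloisField 2 2) := Classical.decEq _
  obtain ⟨x, hx0, hx1⟩ : ∃ x : GaloisField 2 2, x ≠ 0 ∧ x ≠ 1 := by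
    by_contra h
    push_neg at h
    have hsub : (Finset.univ : Finset (GaloisField 2 2)) ⊆ {0, 1} := by
      intro y _
      rcases eq_or_ne y 0 with hy | hy
      · simp [hy]
      · simp [h y hy]
    have hle := Finset.card_le_card hsub
    rw [Finset.card_univ, hcard] at hle
    have h12 : ({0, 1} : Finset (GaloisField 2 2)).card ≤ 2 :=
      (Finset.card_insert_le _ _).trans (by simp)
    omega
  have hx1' : x + 1 ≠ 0 := by
    intro h
    apply hx1
    linear_combination h - h2
  have hx3 : x ^ 3 = 1 := by
    have := FiniteField.pow_card_sub_one_eq_one x hx0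
    rw [hcard] at this
    norm_num at this
    exact this
  have hx2 : x ^ 2 + x + 1 = 0 := by
    have hm : (x + 1) * (x ^ 2 + x + 1) = 0 := by
      linear_combination hx3 + (x ^ 2 + x + 1) * h2
    exact (mul_eq_zero.mp hm).resolve_left hx1'
  constructor
  · intro hsurj
    obtain ⟨f, hf⟩ := hsurj 1
    have hfu : ∀ u : (GaloisField 2 2 × GaloisField 2 2)ˣ, f u.val = 1 := by
      intro u
      have h1 := DFunLike.congr_fun hf u
      have := congrArg Units.val h1
      simpa using this
    have hval : ∀ a b : GaloisField 2 2, a ≠ 0 → b ≠ 0 → f (a, b) = 1 := by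
      intro a b ha hb
      have hu : IsUnit ((a, b) : GaloisField 2 2 × GaloisField 2 2) :=
        IsUnit.of_mul_eq_one (a⁻¹, b⁻¹)
          (Prod.ext (mul_inv_cancel₀ ha) (mul_inv_cancel₀ hb))
      obtain ⟨u, hu⟩ := hu
      rw [← hu]
      exact hfu u
    have hA : f (0, 1) = 1 := by
      have hsum : ((0 : GaloisField 2 2), (1 : GaloisField 2 2))
          = (1, 1) + (x, 1) + (x + 1, 1) := by
        refine Prod.ext ?_ ?_
        · show (0 : GaloisField 2 2) = 1 + x + (x + 1)
          linear_combination (-(x : GaloisField 2 2) - 1) * h2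
        · show (1 : GaloisField 2 2) = 1 + 1 + 1
          linear_combination -h2
      rw [hsum, map_add, map_add, hval 1 1 one_ne_zero one_ne_zero,
        hval x 1 hx0 one_ne_zero, hval (x + 1) 1 hx1' one_ne_zero]
      refine Prod.ext ?_ ?_ <;>
        · show (1 : GaloisField 2 2) + 1 + 1 = 1
          linear_combination h2
    have hB : f (1, 0) = 1 := by
      have hsum : ((1 : GaloisField 2 2), (0 : GaloisField 2 2))
          = (1, 1) + (1, x) + (1, x + 1) := by
        refine Prod.ext ?_ ?_
        · show (1 : GaloisField 2 2) = 1 + 1 + 1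
          linear_combination -h2
        · show (0 : GaloisField 2 2) = 1 + x + (x + 1)
          linear_combination (-(x : GaloisField 2 2) - 1) * h2
      rw [hsum, map_add, map_add, hval 1 1 one_ne_zero one_ne_zero,
        hval 1 x one_ne_zero hx0, hval 1 (x + 1) one_ne_zero hx1']
      refine Prod.ext ?_ ?_ <;>
        · show (1 : GaloisField 2 2) + 1 + 1 = 1
          linear_combination h2
    have hone : (1 : GaloisField 2 2 × GaloisField 2 2) = 0 := by
      calc (1 : GaloisField 2 2 × GaloisField 2 2)
          = f 1 := (map_one f).symm
        _ = f ((1, 0) + (0, 1)) := by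
            congr 1
            refine Prod.ext ?_ ?_ <;> simp
        _ = f (1, 0) + f (0, 1) := map_add f _ _
        _ = 1 + 1 := by rw [hB, hA]
        _ = 0 := by
            refine Prod.ext ?_ ?_ <;>
              · show (1 : GaloisField 2 2) + 1 = 0
                linear_combination h2
    exact one_ne_zero hone
  · intro hsurj
    let m : (ZMod 2 × GaloisField 2 2 × GaloisField 2 2) →*
        (ZMod 2 × GaloisField 2 2 × GaloisField 2 2) :=
      { toFun := fun p => (1, p.2.1 * p.2.2, 1)
        map_one' := by
          refine Prod.ext rfl (Prod.ext ?_ rfl)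
          show (1 : GaloisField 2 2) * 1 = 1
          ring
        map_mul' := by
          intro p q
          refine Prod.ext ?_ (Prod.ext ?_ ?_)
          · show (1 : ZMod 2) = 1 * 1; ring
          · show (p.2.1 * q.2.1) * (p.2.2 * q.2.2) = (p.2.1 * p.2.2) * (q.2.1 * q.2.2)
            ring
          · show (1 : GaloisField 2 2) = 1 * 1; ring }
    obtain ⟨f, hf⟩ := hsurj (Units.map m)
    have hfu : ∀ u : (ZMod 2 × GaloisField 2 2 × GaloisField 2 2)ˣ,
        f u.val = m u.val := by
      intro u
      have h1 := DFunLike.congr_fun hf u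
      have := congrArg Units.val h1
      simpa using this
    have hval : ∀ b c : GaloisField 2 2, b ≠ 0 → c ≠ 0 →
        f (1, b, c) = (1, b * c, 1) := by
      intro b c hb hc
      have hu : IsUnit ((1, b, c) : ZMod 2 × GaloisField 2 2 × GaloisField 2 2) :=
        IsUnit.of_mul_eq_one (1, b⁻¹, c⁻¹)
          (Prod.ext (one_mul 1)
            (Prod.ext (mul_inv_cancel₀ hb) (mul_inv_cancel₀ hc)))
      obtain ⟨u, hu⟩ := hu
      rw [← hu, hfu u, hu]
      rfl
    have hsum : ((1 : ZMod 2), (1 : GaloisField 2 2), (x : GaloisField 2 2))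
        = (1, 1, 1) + (1, x, 1) + (1, x, x) := by
      refine Prod.ext ?_ (Prod.ext ?_ ?_)
      · show (1 : ZMod 2) = 1 + 1 + 1
        decide
      · show (1 : GaloisField 2 2) = 1 + x + x
        linear_combination -(x : GaloisField 2 2) * h2
      · show (x : GaloisField 2 2) = 1 + 1 + x
        linear_combination -h2
    have hkey : f (1, 1, x) = (1, 0, 1) := by
      rw [hsum, map_add, map_add, hval 1 1 one_ne_zero one_ne_zero,
        hval x 1 hx0 one_ne_zero, hval x x hx0 hx0]
      refine Prod.ext ?_ (Prod.ext ?_ ?_)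
      · show (1 : ZMod 2) + 1 + 1 = 1
        decide
      · show (1 : GaloisField 2 2) * 1 + x * 1 + x * x = 0
        linear_combination hx2
      · show (1 : GaloisField 2 2) + 1 + 1 = 1
        linear_combination h2
    have hkey2 := hval 1 x one_ne_zero hx0
    rw [hkey] at hkey2
    have hx0' : (1 : GaloisField 2 2) * x = 0 := congrArg (fun p => p.2.1) hkey2.symm
    rw [one_mul] at hx0'
    exact hx0 hx0'
end

section
/- Let R and S be rings of characteristic 2 such that every nonzero direct ring factor of S has a nontrivial unit group, and suppose there is a nontrivial group homomorphism φ : R^× → Z(S^×) (the center of the unit group of S). Then the group endomorphism ψ(u,v) = (u, φ(u)·v) of (R × S)^× = R^× × S^× is not induced by any ring endomorphism of R × S. -/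
theorem products_fail {R S : Type} [Ring R] [Ring S] [CharP R 2] [CharP S 2]
    (hS : ∀ (A B : Type) (_ : Ring A) (_ : Ring B) (_ : S ≃+* A × B),
      Nontrivial A → ∃ a : Aˣ, a ≠ 1)
    (φ : Rˣ →* Sˣ) (hcen : ∀ u : Rˣ, φ u ∈ Subgroup.center Sˣ)
    (hnt : ∃ u : Rˣ, φ u ≠ 1) :
    ¬ ∃ F : R × S →+* R × S, ∀ (u : Rˣ) (v : Sˣ),
      F ((u : R), (v : S)) = ((u : R), ((φ u * v : Sˣ) : S)) := by
  rintro ⟨F, hF⟩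
  obtain ⟨u, hu⟩ := hnt
  set e : R × S := F (1, 0) with he
  have hid : e * e = e := by rw [he, ← map_mul]; norm_num
  have hid2 : e.2 * e.2 = e.2 := congrArg Prod.snd hid
  have h11 : F (1, 1) = (1, 1) := by simpa using hF 1 1
  have h1v : ∀ v : Sˣ, F (1, (v : S)) = (1, (v : S)) := by
    intro v; simpa using hF 1 v
  have hu1 : F ((u : R), 1) = ((u : R), ((φ u : Sˣ) : S)) := by
    simpa using hF u 1
  -- F(0, v) = (1, v) - e
  have h0v : ∀ v : Sˣ, F ((0 : R), (v : S)) = ((1 : R), (v : S)) - e := by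
    intro v
    have hsplit : ((0 : R), (v : S)) = ((1 : R), (v : S)) - ((1 : R), (0 : S)) := by
      ext <;> simp
    rw [hsplit, map_sub, h1v, he]
  -- first key relation : (v - e.2) * e.2 = 0 for units v
  have key1 : ∀ v : Sˣ, ((v : S) - e.2) * e.2 = 0 := by
    intro v
    have hm : F ((0 : R), (v : S)) * F ((1 : R), (0 : S)) = 0 := by
      rw [← map_mul]
      have : (((0 : R), (v : S)) * ((1 : R), (0 : S))) = (0 : R × S) := by
        ext <;> simp
      rw [this, map_zero]
    have := congrArg Prod.snd hm
    simpa [h0v v, ← he, Prod.snd_mul, sub_mul] using this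
  -- F(0,1) = (1,1) - e
  have h01 : F ((0 : R), (1 : S)) = ((1 : R), (1 : S)) - e := by
    have hsplit : ((0 : R), (1 : S)) = ((1 : R), (1 : S)) - ((1 : R), (0 : S)) := by
      ext <;> simp
    rw [hsplit, map_sub, h11, he]
  -- F(u-1, 0) = (u-1, φu - 1)
  have hum : F (((u : R) - 1, (0 : S))) = ((u : R) - 1, ((φ u : Sˣ) : S) - 1) := by
    have hsplit : (((u : R) - 1, (0 : S)) : R × S) = ((u : R), (1 : S)) - (1, 1) := by
      ext <;> simp
    rw [hsplit, map_sub, hu1, h11]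
    ext <;> simp
  -- second key relation : (φu - 1) * (1 - e.2) = 0
  have key2 : (((φ u : Sˣ) : S) - 1) * (1 - e.2) = 0 := by
    have hm : F (((u : R) - 1, (0 : S))) * F ((0 : R), (1 : S)) = 0 := by
      rw [← map_mul]
      have : ((((u : R) - 1, (0 : S)) : R × S) * ((0 : R), (1 : S))) = 0 := by
        ext <;> simp
      rw [this, map_zero]
    have := congrArg Prod.snd hm
    simpa [hum, h01, Prod.snd_mul] using this
  -- combine, using v = φ u in key1
  have k1 : (((φ u : Sˣ) : S) - 1) * e.2 = 0 := by
    have h := key1 (φ u)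
    calc (((φ u : Sˣ) : S) - 1) * e.2
        = (((φ u : Sˣ) : S) - e.2) * e.2 + (e.2 * e.2 - e.2) := by noncomm_ring
      _ = 0 := by rw [h, hid2]; simp
  have hz : ((φ u : Sˣ) : S) - 1 = 0 := by
    have hd : ((φ u : Sˣ) : S) - 1
        = (((φ u : Sˣ) : S) - 1) * e.2 + (((φ u : Sˣ) : S) - 1) * (1 - e.2) := by
      noncomm_ring
    rw [hd, k1, key2, add_zero]
  have : (φ u : Sˣ) = 1 := Units.ext (by simpa [sub_eq_zero] using hz)
  exact hu this
end

section
/- Let G be a direct sum of copies of C_2 indexed by a set K, with generators x_α, and let I ⊆ F_2[G] be the ideal generated by 1 + x_α + x_β + x_α x_β for all α, β ∈ K. Then the group of units of R = F_2[G]/I is exactly the image of G; i.e., R^× ≅ C_2^{(K)}. -/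
open MonoidAlgebra TrivSqZeroExt
set_option maxHeartbeats 1000000
set_option synthInstance.maxHeartbeats 400000
noncomputable section


variable (K : Type*)

abbrev GG := Multiplicative (K →₀ ZMod 2)
variable {K}
def xg (α : K) : GG K := Multiplicative.ofAdd (Finsupp.single α 1)
variable (K)
def Igen : Ideal (MonoidAlgebra (ZMod 2) (GG K)) := Ideal.span
  { z | ∃ α β : K,
      z = 1 + of (ZMod 2) (GG K) (xg α) + of (ZMod 2) (GG K) (xg β) +
          of (ZMod 2) (GG K) (xg α) * of (ZMod 2) (GG K) (xg β) }
abbrev RR := MonoidAlgebra (ZMod 2) (GG K) ⧸ Igen K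
abbrev RT := TrivSqZeroExt (ZMod 2) (K →₀ ZMod 2)

-- exponential monoid hom
def expG : GG K →* RT K where
  toFun g := 1 + inr (Multiplicative.toAdd g)
  map_one' := by simp
  map_mul' a b := by
    have : (inr (Multiplicative.toAdd a) : RT K) * inr (Multiplicative.toAdd b) = 0 :=
      inr_mul_inr _ _ _
    simp [mul_add, add_mul, this, inr_add]
    abel

def phi : MonoidAlgebra (ZMod 2) (GG K) →ₐ[ZMod 2] RT K :=
  MonoidAlgebra.lift (ZMod 2) (RT K) (GG K) (expG K)

theorem phi_of (g : GG K) : phi K (of (ZMod 2) (GG K) g) = 1 + inr (Multiplicative.toAdd g) := by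
  show MonoidAlgebra.lift (ZMod 2) (RT K) (GG K) (expG K) (of (ZMod 2) (GG K) g) = _
  rw [MonoidAlgebra.lift_of]; rfl


instance : CharP (MonoidAlgebra (ZMod 2) (GG K)) 2 :=
  charP_of_injective_ringHom (f := MonoidAlgebra.singleOneRingHom)
    (fun a b h => by simpa using congrArg (fun z => z.coeff 1) h) 2

instance : CharP (RT K) 2 :=
  charP_of_injective_ringHom (f := (inlHom (ZMod 2) (K →₀ ZMod 2)))
    (fun a b h => by simpa using congrArg fst h) 2

theorem phi_ker : ∀ z ∈ Igen K, phi K z = 0 := by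
  intro z hz
  refine Submodule.span_induction ?_ (map_zero _) (fun a b _ _ ha hb => by
    rw [map_add, ha, hb, add_zero]) (fun c a _ ha => by
    rw [smul_eq_mul, map_mul, ha, mul_zero]) hz
  rintro z ⟨α, β, rfl⟩
  simp only [map_add, map_mul, map_one, phi_of]
  have h0 : (inr (Multiplicative.toAdd (xg α)) : RT K) * inr (Multiplicative.toAdd (xg β)) = 0 :=
    inr_mul_inr _ _ _
  have h2 : ∀ y : RT K, y + y = 0 := fun y => by
    rw [← two_smul (ZMod 2) y, show (2 : ZMod 2) = 0 from rfl, zero_smul]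
  set a := (inr (Multiplicative.toAdd (xg α)) : RT K)
  set b := (inr (Multiplicative.toAdd (xg β)) : RT K)
  have hprod : (1 + a) * (1 + b) = 1 + a + b := by
    rw [add_mul, one_mul, mul_add, mul_one, h0, add_zero]; abel
  rw [hprod]
  have : (1:RT K) + (1 + a) + (1 + b) + (1 + a + b)
      = ((1+1) + (1+1)) + ((a + a) + (b + b)) := by abel
  rw [this, h2, h2, h2, add_zero, add_zero]

def phibar : RR K →+* RT K :=
  Ideal.Quotient.lift (Igen K) (phi K).toRingHom (phi_ker K)

abbrev mkq : MonoidAlgebra (ZMod 2) (GG K) →+* RR K := Ideal.Quotient.mk (Igen K)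

theorem phibar_mk_of (g : GG K) :
    phibar K (mkq K (of (ZMod 2) (GG K) g)) = 1 + inr (Multiplicative.toAdd g) := by
  rw [phibar, mkq, Ideal.Quotient.lift_mk]
  exact phi_of K g

theorem hR2 : ∀ a : RR K, a + a = 0 := fun a => by
  rw [← two_smul (ZMod 2) a, show (2 : ZMod 2) = 0 from rfl, zero_smul]

def mone (α : K) : RR K := mkq K (1 + of (ZMod 2) (GG K) (xg α))

theorem hzero (α β : K) : mone K α * mone K β = 0 := by
  rw [mone, mone, ← map_mul, Ideal.Quotient.eq_zero_iff_mem]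
  have : (1 + of (ZMod 2) (GG K) (xg α)) * (1 + of (ZMod 2) (GG K) (xg β))
      = 1 + of (ZMod 2) (GG K) (xg α) + of (ZMod 2) (GG K) (xg β) +
        of (ZMod 2) (GG K) (xg α) * of (ZMod 2) (GG K) (xg β) := by ring
  rw [this]
  exact Ideal.subset_span ⟨α, β, rfl⟩

theorem one_add_mone (α : K) : 1 + mone K α = mkq K (of (ZMod 2) (GG K) (xg α)) := by
  have : (1 : RR K) + mone K α = (1 + 1) + mkq K (of (ZMod 2) (GG K) (xg α)) := by
    rw [mone, map_add, map_one]; abel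
  rw [this, hR2 K 1, zero_add]

def psilin : (K →₀ ZMod 2) →ₗ[ZMod 2] RR K :=
  Finsupp.lsum (ZMod 2) fun α => LinearMap.toSpanSingleton (ZMod 2) (RR K) (mone K α)

theorem psilin_apply (f : K →₀ ZMod 2) : psilin K f = f.sum fun α c => c • mone K α := rfl

theorem psilin_single (α : K) : psilin K (Finsupp.single α 1) = mone K α := by
  rw [psilin_apply, Finsupp.sum_single_index (by simp), one_smul]

theorem mone_mul_psilin (α : K) (f : K →₀ ZMod 2) : mone K α * psilin K f = 0 := by
  rw [psilin_apply, Finsupp.mul_sum]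
  refine Finset.sum_eq_zero fun β _ => ?_
  simp only [mul_smul_comm, hzero, smul_zero]

theorem psilin_mul_psilin (f g : K →₀ ZMod 2) : psilin K f * psilin K g = 0 := by
  rw [psilin_apply, Finsupp.sum_mul]
  refine Finset.sum_eq_zero fun α _ => ?_
  simp only [smul_mul_assoc, mone_mul_psilin, smul_zero]

def psi : RT K →ₐ[ZMod 2] RR K :=
  TrivSqZeroExt.liftEquivOfComm ⟨psilin K, psilin_mul_psilin K⟩

theorem psi_inr (m : K →₀ ZMod 2) : psi K (inr m) = psilin K m := by
  simp [psi]

theorem hkey (f : K →₀ ZMod 2) :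
    mkq K (of (ZMod 2) (GG K) (Multiplicative.ofAdd f)) = 1 + psilin K f := by
  induction f using Finsupp.induction with
  | zero =>
    rw [show (Multiplicative.ofAdd (0 : K →₀ ZMod 2)) = (1 : GG K) from rfl, map_one, map_one,
      map_zero, add_zero]
  | single_add α b f _ hb ih =>
    have hb1 : b = 1 := by revert hb; revert b; decide
    subst hb1
    have : (Multiplicative.ofAdd (Finsupp.single α 1 + f) : GG K)
        = xg α * Multiplicative.ofAdd f := rfl
    rw [this, map_mul, map_mul, ih, ← one_add_mone, map_add, psilin_single]
    have hexp : (1 + mone K α) * (1 + psilin K f)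
        = 1 + (mone K α + psilin K f) + mone K α * psilin K f := by ring
    rw [hexp, mone_mul_psilin, add_zero]


theorem hT2 : ∀ y : RT K, y + y = 0 := fun y => by
  rw [← two_smul (ZMod 2) y, show (2 : ZMod 2) = 0 from rfl, zero_smul]

theorem hM2 : ∀ m : K →₀ ZMod 2, m + m = 0 := fun m => by
  rw [← two_smul (ZMod 2) m, show (2 : ZMod 2) = 0 from rfl, zero_smul]

theorem hunit1 : ∀ a : ZMod 2, IsUnit a → a = 1 := by
  have h : ∀ a : ZMod 2, a ≠ 0 → a = 1 := by decide
  exact fun a ha => h a ha.ne_zero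

def phibarA : RR K →ₐ[ZMod 2] RT K :=
  Ideal.Quotient.liftₐ (Igen K) (phi K) (phi_ker K)

theorem phibarA_mk_of (g : GG K) :
    phibarA K (mkq K (of (ZMod 2) (GG K) g)) = 1 + inr (Multiplicative.toAdd g) := by
  rw [phibarA, mkq]
  exact phi_of K g

theorem phibarA_mone (α : K) : phibarA K (mone K α) = inr (Finsupp.single α 1) := by
  have h : mone K α = mkq K 1 + mkq K (of (ZMod 2) (GG K) (xg α)) := by rw [mone, map_add]
  rw [h, map_add, phibarA_mk_of, show phibarA K ((mkq K) 1) = 1 by rw [map_one, map_one]]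
  have h2 : (1 : RT K) + (1 + inr (Multiplicative.toAdd (xg α)))
      = ((1:RT K) + 1) + inr (Multiplicative.toAdd (xg α)) := by abel
  rw [h2, hT2, zero_add]
  rfl

theorem phibarA_psilin (m : K →₀ ZMod 2) : phibarA K (psilin K m) = inr m := by
  rw [psilin_apply, map_finsuppSum, Finsupp.sum]
  have h1 : ∀ α ∈ m.support, phibarA K (m α • mone K α) = inr (Finsupp.single α (m α)) := by
    intro α _
    rw [map_smul, phibarA_mone, ← Finsupp.smul_single_one α (m α)]
    exact (map_smul (inrHom (ZMod 2) (K →₀ ZMod 2)) (m α) (Finsupp.single α 1))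
  rw [Finset.sum_congr rfl h1]
  rw [show (∑ α ∈ m.support, (inr (Finsupp.single α (m α)) : RT K))
      = inr (∑ α ∈ m.support, Finsupp.single α (m α)) from
    (map_sum (inrHom (ZMod 2) (K →₀ ZMod 2)) _ _).symm]
  rw [show (∑ α ∈ m.support, Finsupp.single α (m α)) = m from Finsupp.sum_single m]

theorem psi_phibarA (r : RR K) : psi K (phibarA K r) = r := by
  obtain ⟨z, rfl⟩ := Ideal.Quotient.mk_surjective r
  induction z using MonoidAlgebra.induction_on with
  | of g =>
    rw [show (Ideal.Quotient.mk (Igen K)) (of (ZMod 2) (GG K) g)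
        = mkq K (of (ZMod 2) (GG K) g) from rfl, phibarA_mk_of, map_add, map_one, psi_inr]
    exact (hkey K (Multiplicative.toAdd g)).symm
  | add a b ha hb => rw [map_add, map_add, map_add, ha, hb]
  | smul c a ha =>
    rw [show (Ideal.Quotient.mk (Igen K)) (c • a) = c • (Ideal.Quotient.mk (Igen K)) a from
      map_smul (Ideal.Quotient.mkₐ (ZMod 2) (Igen K)) c a, map_smul, map_smul, ha]

theorem phibarA_psi (y : RT K) : phibarA K (psi K y) = y := by
  induction y using TrivSqZeroExt.ind with
  | inl_add_inr a m =>
    rw [map_add, map_add, psi_inr, phibarA_psilin]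
    congr 1
    have h0 : ∀ b : ZMod 2, phibarA K (psi K (inl b)) = inl b := by
      have hb : ∀ b : ZMod 2, b = 0 ∨ b = 1 := by decide
      intro b
      rcases hb b with rfl | rfl
      · rw [show (inl (0 : ZMod 2) : RT K) = 0 from inl_zero _, map_zero, map_zero]
      · rw [show (inl (1 : ZMod 2) : RT K) = 1 from inl_one _, map_one, map_one]
    exact h0 a

noncomputable def eIso : RR K ≃+* RT K :=
  { Equiv.mk (phibarA K) (psi K) (psi_phibarA K) (phibarA_psi K) with
    map_mul' := map_mul (phibarA K), map_add' := map_add (phibarA K) }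

theorem exp_sq (g : GG K) : expG K g * expG K g = 1 := by
  rw [← map_mul]
  have h1 : g * g = (1 : GG K) := by
    have h := hM2 K (Multiplicative.toAdd g)
    have h2 : g * g = Multiplicative.ofAdd (Multiplicative.toAdd g + Multiplicative.toAdd g) := rfl
    rw [h2, h]; rfl
  rw [h1, map_one]

noncomputable def nu : GG K →* (RT K)ˣ where
  toFun g := ⟨expG K g, expG K g, exp_sq K g, exp_sq K g⟩
  map_one' := Units.ext (map_one (expG K))
  map_mul' a b := Units.ext (map_mul (expG K) a b)

theorem fst_unit (u : (RT K)ˣ) : fst (u : RT K) = 1 :=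
  hunit1 _ (u.isUnit.map (fstHom (ZMod 2) (ZMod 2) (K →₀ ZMod 2)))

theorem snd_expG (g : GG K) : snd (expG K g) = Multiplicative.toAdd g := by
  show snd ((1 : RT K) + inr (Multiplicative.toAdd g)) = _
  rw [snd_add, snd_one, snd_inr, zero_add]

theorem nu_bij : Function.Bijective (nu K) := by
  constructor
  · intro a b hab
    have h1 : snd ((nu K a : RT K)) = snd ((nu K b : RT K)) := by rw [hab]
    rw [show ((nu K a : RT K)) = expG K a from rfl, show ((nu K b : RT K)) = expG K b from rfl,
      snd_expG, snd_expG] at h1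
    exact Multiplicative.toAdd.injective h1
  · intro u
    refine ⟨Multiplicative.ofAdd (snd (u : RT K)), Units.ext ?_⟩
    show expG K (Multiplicative.ofAdd (snd (u : RT K))) = (u : RT K)
    show (1 : RT K) + inr (Multiplicative.toAdd (Multiplicative.ofAdd (snd (u : RT K)))) = _
    rw [toAdd_ofAdd]
    conv_rhs => rw [← inl_fst_add_inr_snd_eq ((u : RT K))]
    rw [fst_unit, inl_one]

noncomputable def finalIso : (RR K)ˣ ≃* GG K :=
  (Units.mapEquiv (eIso K).toMulEquiv).trans (MulEquiv.ofBijective (nu K) (nu_bij K)).symm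

theorem main :
    ({ r : RR K | IsUnit r } =
      Set.range (fun g : GG K => Ideal.Quotient.mk (Igen K) (of (ZMod 2) (GG K) g))) ∧
    Nonempty ((RR K)ˣ ≃* GG K) := by
  refine ⟨?_, ⟨finalIso K⟩⟩
  ext r
  simp only [Set.mem_setOf_eq, Set.mem_range]
  constructor
  · intro hr
    refine ⟨Multiplicative.ofAdd (snd (eIso K r)), ?_⟩
    apply (eIso K).injective
    show phibarA K (mkq K _) = _
    rw [phibarA_mk_of, toAdd_ofAdd]
    have h1 : fst (eIso K r) = 1 := by
      have hu : IsUnit (eIso K r) := hr.map (eIso K)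
      exact hunit1 _ (hu.map (fstHom (ZMod 2) (ZMod 2) (K →₀ ZMod 2)))
    conv_rhs => rw [← inl_fst_add_inr_snd_eq (eIso K r)]
    rw [h1, inl_one]
  · rintro ⟨g, rfl⟩
    exact ((Group.isUnit g).map (of (ZMod 2) (GG K))).map (mkq K)

end

theorem units_of_quotient_of_elementary_abelian_two_group (K : Type*) :
    let G := Multiplicative (K →₀ ZMod 2)
    let x : K → G := fun α => Multiplicative.ofAdd (Finsupp.single α 1)
    let I : Ideal (MonoidAlgebra (ZMod 2) G) := Ideal.span
      { z | ∃ α β : K,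
          z = 1 + of (ZMod 2) G (x α) + of (ZMod 2) G (x β) +
              of (ZMod 2) G (x α) * of (ZMod 2) G (x β) }
    ({ r : MonoidAlgebra (ZMod 2) G ⧸ I | IsUnit r } =
      Set.range (fun g : G => Ideal.Quotient.mk I (of (ZMod 2) G g))) ∧
    Nonempty ((MonoidAlgebra (ZMod 2) G ⧸ I)ˣ ≃* G) := by
  intro G x I
  exact main K
end

section
/- If A is a group admitting a surjective homomorphism onto C_4, then A × C_4 is not fully realizable: for any ring R of characteristic 2 whose unit group is (isomorphic to) A × C_4 and which is generated by its units, not every group endomorphism of A × C_4 is induced by a ring endomorphism of R. -/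
theorem A_times_C4_not_fully_realizable {A : Type} [Group A]
    (h : A →* Multiplicative (ZMod 4)) (hsurj : Function.Surjective h)
    (R : Type) [Ring R] [CharP R 2]
    (hgen : Subring.closure { r : R | IsUnit r } = ⊤)
    (e : Rˣ ≃* A × Multiplicative (ZMod 4)) :
    ¬ Function.Surjective
      (fun f : R →+* R => (Units.map (f : R →* R) : Rˣ →* Rˣ)) := by
  intro hs
  classical
  obtain ⟨a0, ha0⟩ := hsurj (Multiplicative.ofAdd (1 : ZMod 4))
  set g : Multiplicative (ZMod 4) := Multiplicative.ofAdd (1 : ZMod 4) with hgdef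
  set u : Rˣ := e.symm (1, g) with hudef
  set w : Rˣ := e.symm (a0, 1) with hwdef
  have eu : e u = (1, g) := e.apply_symm_apply _
  have ew : e w = (a0, 1) := e.apply_symm_apply _
  have h2 : ∀ x : R, x + x = 0 := CharTwo.add_self_eq_zero
  have hflip : ∀ x y : R, 1 + x = y → x = 1 + y := by
    intro x y hxy
    rw [← hxy, ← add_assoc, h2 1, zero_add]
  -- commutation
  have hcU : ∀ v : Rˣ, Commute u v := by
    intro v
    apply e.injective
    rw [map_mul, map_mul, eu]
    rw [Prod.ext_iff]
    constructor
    · simp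
    · simp [mul_comm]
  -- the commutative subring generated by u, u⁻¹, w
  set sset : Set R := {(u : R), ((u⁻¹ : Rˣ) : R), (w : R)} with hsset
  have hcomm : ∀ x ∈ sset, ∀ y ∈ sset, x * y = y * x := by
    have c1 : Commute ((u : Rˣ) : R) ((u⁻¹ : Rˣ) : R) := ((Commute.refl u).inv_right).units_val
    have c2 : Commute ((u : Rˣ) : R) ((w : Rˣ) : R) := (hcU w).units_val
    have c3 : Commute (((u⁻¹ : Rˣ) : R)) ((w : Rˣ) : R) := ((hcU w).inv_left).units_val
    intro x hx y hy
    simp only [hsset, Set.mem_insert_iff, Set.mem_singleton_iff] at hx hy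
    rcases hx with rfl | rfl | rfl <;> rcases hy with rfl | rfl | rfl
    · rfl
    · exact c1
    · exact c2
    · exact c1.symm
    · rfl
    · exact c3
    · exact c2.symm
    · exact c3.symm
    · rfl
  set S := Subring.closure sset with hSdef
  letI : CommRing S := Subring.closureCommRingOfComm hcomm
  have hmu : (u : R) ∈ S := Subring.subset_closure (by simp [hsset])
  have hmi : ((u⁻¹ : Rˣ) : R) ∈ S := Subring.subset_closure (by simp [hsset])
  have hmw : (w : R) ∈ S := Subring.subset_closure (by simp [hsset])
  set uS : S := ⟨(u : R), hmu⟩ with huS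
  set iS : S := ⟨((u⁻¹ : Rˣ) : R), hmi⟩ with hiS
  set wS : S := ⟨(w : R), hmw⟩ with hwS
  have uS_val : (uS : R) = (u : R) := rfl
  have iS_val : (iS : R) = ((u⁻¹ : Rˣ) : R) := rfl
  have wS_val : (wS : R) = (w : R) := rfl
  have h1S : (1 : S) + 1 = 0 := Subtype.ext (by push_cast; exact h2 1)
  have hu4 : u * u * (u * u) = 1 := by
    apply e.injective
    rw [map_mul, map_mul, eu, map_one]
    simp only [Prod.mk_mul_mk, Prod.mk_eq_one]
    refine ⟨by simp, by rw [hgdef]; decide⟩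
  have hu4S : uS * uS * (uS * uS) = 1 := by
    apply Subtype.ext
    push_cast [uS_val]
    have := congrArg (Units.val) hu4
    push_cast at this
    exact this
  have huiS : uS * iS = 1 := by
    apply Subtype.ext
    push_cast [uS_val, iS_val]
    exact u.mul_inv
  -- square-one units of the form 1 + (1+u^2) v
  have sq1 : ∀ v : S, (1 + (1 + uS * uS) * v) * (1 + (1 + uS * uS) * v) = 1 := by
    intro v
    linear_combination (v * v) * hu4S + ((1 + uS * uS) * (v + v * v)) * h1S
  -- lifting endomorphisms
  have key : ∀ φ : A × Multiplicative (ZMod 4) →* A × Multiplicative (ZMod 4),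
      ∃ f : R →+* R, ∀ v : Rˣ, f ↑v = ↑(e.symm (φ (e v))) := by
    intro φ
    obtain ⟨f, hf⟩ := hs ((e.symm.toMonoidHom.comp (φ.comp e.toMonoidHom)))
    refine ⟨f, fun v => ?_⟩
    have := congrArg (fun F : Rˣ →* Rˣ => ((F v : Rˣ) : R)) hf
    simpa using this
  set φ₃ : A × Multiplicative (ZMod 4) →* A × Multiplicative (ZMod 4) :=
    (MonoidHom.fst A (Multiplicative (ZMod 4))).prod
      (h.comp (MonoidHom.fst A (Multiplicative (ZMod 4)))) with hφ₃
  set φ₄ : A × Multiplicative (ZMod 4) →* A × Multiplicative (ZMod 4) :=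
    (MonoidHom.fst A (Multiplicative (ZMod 4))).prod
      ((h.comp (MonoidHom.fst A (Multiplicative (ZMod 4)))) *
        (MonoidHom.snd A (Multiplicative (ZMod 4)))) with hφ₄
  have hφ₃app : ∀ p : A × Multiplicative (ZMod 4), φ₃ p = (p.1, h p.1) := by
    intro p; rfl
  have hφ₄app : ∀ p : A × Multiplicative (ZMod 4), φ₄ p = (p.1, h p.1 * p.2) := by
    intro p; rfl
  obtain ⟨f₃, hf₃⟩ := key φ₃
  obtain ⟨f₄, hf₄⟩ := key φ₄
  have hf₃u : f₃ (u : R) = 1 := by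
    rw [hf₃ u, eu, hφ₃app]
    have : ((1 : A), h 1) = (1 : A × Multiplicative (ZMod 4)) := by
      rw [map_one]; rfl
    rw [this, map_one, Units.val_one]
  -- T ≠ 0
  have Tne : (1 : R) + (u : R) * (u : R) ≠ 0 := by
    intro hT
    have hU2 : (u : R) * (u : R) = 1 := by
      have := hflip _ _ hT; rwa [add_zero] at this
    have huu : u * u = 1 := Units.ext (by simpa using hU2)
    have h5 := congrArg e huu
    rw [map_mul, eu, map_one, Prod.mk_mul_mk] at h5
    have h6 : g * g = (1 : Multiplicative (ZMod 4)) := congrArg Prod.snd h5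
    rw [hgdef] at h6
    exact absurd h6 (by decide)
  -- Lemma A : T * v = T for any unit v whose sigma squares to one
  have lemA : ∀ v : Rˣ,
      (1 + (1 + (u : R) * (u : R)) * (v : R)) * (1 + (1 + (u : R) * (u : R)) * (v : R)) = 1 →
      (1 + (u : R) * (u : R)) * (v : R) = 1 + (u : R) * (u : R) := by
    intro v hsq
    set σ : Rˣ := ⟨1 + (1 + (u : R) * (u : R)) * (v : R),
      1 + (1 + (u : R) * (u : R)) * (v : R), hsq, hsq⟩ with hσdef
    have hσval : f₃ (σ : R) = 1 := by
      show f₃ (1 + (1 + (u : R) * (u : R)) * (v : R)) = 1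
      rw [map_add, map_one, map_mul, map_add, map_one, map_mul, hf₃u, mul_one, h2 1,
        zero_mul, add_zero]
    have hψσ : e.symm (φ₃ (e σ)) = 1 := Units.ext ((hf₃ σ).symm.trans hσval)
    have h6 : φ₃ (e σ) = 1 := by
      have := congrArg e hψσ
      rwa [MulEquiv.apply_symm_apply, map_one] at this
    have hfst : (e σ).1 = 1 := by
      have := congrArg Prod.fst h6
      rwa [hφ₃app] at this
    have hσσ : σ * σ = 1 := Units.ext (by simpa using hsq)
    have hsnd : (e σ).2 * (e σ).2 = 1 := by
      have h7 := congrArg e hσσ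
      rw [map_mul, map_one] at h7
      have := congrArg Prod.snd h7
      simpa using this
    have hδ : (e σ).2 = 1 ∨ (e σ).2 = g * g := by
      rw [hgdef]
      revert hsnd
      generalize (e σ).2 = d
      revert d
      decide
    have hσe : σ = e.symm ((1 : A), (e σ).2) := by
      rw [← hfst]
      exact (e.symm_apply_apply σ).symm
    rcases hδ with hδ | hδ
    · exfalso
      rw [hδ] at hσe
      have : σ = 1 := by
        rw [hσe]
        have : ((1 : A), (1 : Multiplicative (ZMod 4))) = (1 : A × Multiplicative (ZMod 4)) := rfl
        rw [this, map_one]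
      have hval := congrArg Units.val this
      simp only [Units.val_one] at hval
      have hTv : (1 + (u : R) * (u : R)) * (v : R) = 0 := by
        have : (1 : R) + (1 + (u : R) * (u : R)) * (v : R) = 1 + 0 := by
          rw [add_zero]; exact hval
        exact add_left_cancel this
      apply Tne
      have : (1 + (u : R) * (u : R)) * ((v : R) * ((v⁻¹ : Rˣ) : R)) = 0 := by
        rw [← mul_assoc, hTv, zero_mul]
      rwa [Units.mul_inv, mul_one] at this
    · rw [hδ] at hσe
      have huu2 : σ = u * u := by
        rw [hσe]
        have : ((1 : A), g * g) = ((1 : A), g) * ((1 : A), g) := by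
          rw [Prod.mk_mul_mk, one_mul]
        rw [this, map_mul]
      have hval := congrArg Units.val huu2
      simp only [Units.val_mul] at hval
      exact hflip _ _ hval
  -- instantiate Lemma A at w and w * w
  have sqw : (1 + (1 + (u : R) * (u : R)) * (w : R)) *
      (1 + (1 + (u : R) * (u : R)) * (w : R)) = 1 := by
    have := congrArg Subtype.val (sq1 wS)
    push_cast [uS_val, wS_val] at this
    exact this
  have htw : (1 + (u : R) * (u : R)) * (w : R) = 1 + (u : R) * (u : R) := lemA w sqw
  have sqwwS := congrArg Subtype.val (sq1 (wS * wS))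
  have sqww : (1 + (1 + (u : R) * (u : R)) * ((w * w : Rˣ) : R)) *
      (1 + (1 + (u : R) * (u : R)) * ((w * w : Rˣ) : R)) = 1 := by
    push_cast [uS_val, wS_val] at sqwwS
    rw [Units.val_mul]
    exact sqwwS
  have htww : (1 + (u : R) * (u : R)) * ((w : R) * (w : R)) = 1 + (u : R) * (u : R) := by
    have := lemA (w * w) sqww
    rwa [Units.val_mul] at this
  have htwwS : (1 + uS * uS) * (wS * wS) = 1 + uS * uS := by
    apply Subtype.ext
    push_cast [uS_val, wS_val]
    exact htww
  -- the unit x₁ = 1 + (1+u) w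
  have hx1a : (1 + (1 + (u : R)) * (w : R)) *
      ((1 + (1 + (u : R)) * (w : R)) * (((u⁻¹ : Rˣ) : R) * ((u⁻¹ : Rˣ) : R))) = 1 := by
    have hS : (1 + (1 + uS) * wS) * ((1 + (1 + uS) * wS) * (iS * iS)) = 1 := by
      linear_combination (iS * iS) * htwwS +
        ((iS * iS) * (1 + (1 + uS) * wS + uS * (wS * wS))) * h1S + (uS * iS + 1) * huiS
    have := congrArg Subtype.val hS
    push_cast [uS_val, iS_val, wS_val] at this
    exact this
  have hx1b : ((1 + (1 + (u : R)) * (w : R)) * (((u⁻¹ : Rˣ) : R) * ((u⁻¹ : Rˣ) : R))) *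
      (1 + (1 + (u : R)) * (w : R)) = 1 := by
    have hS : ((1 + (1 + uS) * wS) * (iS * iS)) * (1 + (1 + uS) * wS) = 1 := by
      linear_combination (iS * iS) * htwwS +
        ((iS * iS) * (1 + (1 + uS) * wS + uS * (wS * wS))) * h1S + (uS * iS + 1) * huiS
    have := congrArg Subtype.val hS
    push_cast [uS_val, iS_val, wS_val] at this
    exact this
  set x₁ : Rˣ := ⟨1 + (1 + (u : R)) * (w : R),
    (1 + (1 + (u : R)) * (w : R)) * (((u⁻¹ : Rˣ) : R) * ((u⁻¹ : Rˣ) : R)),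
    hx1a, hx1b⟩ with hx₁def
  -- step 3 : the A-component of x₁ is trivial
  have hf₃x : f₃ (x₁ : R) = 1 := by
    show f₃ (1 + (1 + (u : R)) * (w : R)) = 1
    rw [map_add, map_mul, map_add, map_one, hf₃u, h2 1, zero_mul, add_zero]
  have hψ₃x : e.symm (φ₃ (e x₁)) = 1 := Units.ext ((hf₃ x₁).symm.trans hf₃x)
  have h9 : φ₃ (e x₁) = 1 := by
    have := congrArg e hψ₃x
    rwa [MulEquiv.apply_symm_apply, map_one] at this
  have hfstx : (e x₁).1 = 1 := by
    have := congrArg Prod.fst h9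
    rwa [hφ₃app] at this
  -- step 4 : applying the lift of φ₄
  have hf₄u : f₄ (u : R) = (u : R) := by
    rw [hf₄ u, eu, hφ₄app]
    have h10 : ((((1 : A), g)).1, h (((1 : A), g)).1 * (((1 : A), g)).2) = ((1 : A), g) := by
      simp
    rw [h10, ← hudef]
  have hf₄w : f₄ (w : R) = (w : R) * (u : R) := by
    rw [hf₄ w, ew, hφ₄app]
    have h11 : (((a0, (1 : Multiplicative (ZMod 4)))).1,
        h ((a0, (1 : Multiplicative (ZMod 4)))).1 * ((a0, (1 : Multiplicative (ZMod 4)))).2) =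
        ((a0 : A), g) := by simp [ha0]
    rw [h11]
    have h12 : ((a0 : A), g) = (a0, (1 : Multiplicative (ZMod 4))) * ((1 : A), g) := by
      rw [Prod.mk_mul_mk, mul_one, one_mul]
    rw [h12, map_mul, ← hudef, ← hwdef, Units.val_mul]
  have hψ₄x : e.symm (φ₄ (e x₁)) = x₁ := by
    have hh : h (e x₁).1 = 1 := by rw [hfstx, map_one]
    have hl : φ₄ (e x₁) = e x₁ := by
      rw [hφ₄app, hh, one_mul]
    rw [hl, MulEquiv.symm_apply_apply]
  have h8 : f₄ ((1 : R) + (1 + (u : R)) * (w : R)) = (1 : R) + (1 + (u : R)) * (w : R) := by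
    have := hf₄ x₁
    rw [hψ₄x] at this
    exact this
  have hcomp : f₄ ((1 : R) + (1 + (u : R)) * (w : R)) =
      1 + (1 + (u : R)) * ((w : R) * (u : R)) := by
    rw [map_add, map_mul, map_add, map_one, hf₄u, hf₄w]
  have hEqR : (1 : R) + (1 + (u : R)) * ((w : R) * (u : R)) = 1 + (1 + (u : R)) * (w : R) :=
    hcomp.symm.trans h8
  -- final contradiction
  have hEqS : (1 : S) + (1 + uS) * (wS * uS) = 1 + (1 + uS) * wS := by
    apply Subtype.ext
    push_cast [uS_val, wS_val]
    exact hEqR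
  have hfin : (1 + uS * uS) * wS = 0 := by
    linear_combination hEqS + wS * h1S
  have hfinR : (1 + (u : R) * (u : R)) * (w : R) = 0 := by
    have := congrArg Subtype.val hfin
    push_cast [uS_val, wS_val] at this
    exact this
  exact Tne (htw ▸ hfinR)
end
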